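/- For strictly positive θ, the derivative of g(x) = (∑_{k=0}^{Δ-1} θ_k C(Δ-1,k) x^k)^{-1} satisfies |g'(x)| ≤ θ_0^{-1} ψ for all x ≥ 0, where ψ = max_{0 ≤ k ≤ Δ-2} (Δ-1-k) θ_{k+1}/θ_k. -/

import Mathlib

theorem stmt_6 (Δ : ℕ) (hΔ : 3 ≤ Δ) (θ : ℕ → ℝ)
    (hpos : ∀ k ≤ Δ - 1, 0 < θ k)
    (x : ℝ) (hx : 0 ≤ x) :
    |deriv (fun y : ℝ =>
        (∑ k ∈ Finset.range Δ, θ k * ((Δ - 1).choose k : ℝ) * y ^ k)⁻¹) x| ≤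
      (θ 0)⁻¹ *
        (Finset.range (Δ - 1)).sup' (Finset.nonempty_range_iff.mpr (by omega))
          (fun k => ((Δ : ℝ) - 1 - k) * θ (k + 1) / θ k) := by
  have hΔn : Δ = (Δ - 1) + 1 := by omega
  set n := Δ - 1 with hn
  set ψ := (Finset.range n).sup' (Finset.nonempty_range_iff.mpr (by omega))
      (fun k => ((Δ : ℝ) - 1 - k) * θ (k + 1) / θ k) with hψdef
  set P : ℝ → ℝ := fun y => ∑ k ∈ Finset.range Δ, θ k * ((Δ - 1).choose k : ℝ) * y ^ k with hPdef
  set D : ℝ := ∑ k ∈ Finset.range Δ, θ k * ((Δ - 1).choose k : ℝ) * ((k : ℝ) * x ^ (k - 1)) with hDdef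
  have hP' : HasDerivAt P D x := by
    apply HasDerivAt.fun_sum
    intro k hk
    exact (hasDerivAt_pow k x).const_mul _
  have hterm : ∀ k ∈ Finset.range Δ, 0 ≤ θ k * ((Δ - 1).choose k : ℝ) * x ^ k := by
    intro k hk
    have hk' : k ≤ Δ - 1 := by have := Finset.mem_range.mp hk; omega
    have := hpos k hk'
    positivity
  have hθ0 : 0 < θ 0 := hpos 0 (by omega)
  have hP0 : θ 0 ≤ P x := by
    have h := Finset.single_le_sum hterm (Finset.mem_range.mpr (by omega : 0 < Δ))
    simpa using h
  have hPpos : 0 < P x := lt_of_lt_of_le hθ0 hP0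
  have hderiv : deriv (fun y => (P y)⁻¹) x = -D / (P x) ^ 2 :=
    (hP'.inv hPpos.ne').deriv
  have hDnonneg : 0 ≤ D := by
    rw [hDdef]
    apply Finset.sum_nonneg
    intro k hk
    have hk' : k ≤ Δ - 1 := by have := Finset.mem_range.mp hk; omega
    have := hpos k hk'
    positivity
  -- rewrite D as a sum over range n
  have hDeq : D = ∑ k ∈ Finset.range n, ((Δ : ℝ) - 1 - k) * θ (k + 1) * ((n.choose k : ℝ)) * x ^ k := by
    rw [hDdef, hΔn, Finset.sum_range_succ']
    simp only [Nat.cast_zero, zero_mul, mul_zero, add_zero]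
    apply Finset.sum_congr rfl
    intro k hk
    have hkn : k < n := Finset.mem_range.mp hk
    have hchoose : (n.choose (k + 1) : ℝ) * ((k : ℝ) + 1) = (n.choose k : ℝ) * ((n : ℝ) - k) := by
      have h := Nat.choose_succ_right_eq n k
      have h2 := congrArg (Nat.cast : ℕ → ℝ) h
      push_cast [Nat.cast_sub hkn.le] at h2
      linarith
    simp only [Nat.add_sub_cancel]
    push_cast
    linear_combination θ (k + 1) * x ^ k * hchoose
  have hψ0 : 0 ≤ ψ := by
    have h1 : ((Δ : ℝ) - 1 - (0:ℕ)) * θ (0 + 1) / θ 0 ≤ ψ :=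
      Finset.le_sup' (fun k => ((Δ : ℝ) - 1 - k) * θ (k + 1) / θ k)
        (Finset.mem_range.mpr (by omega : 0 < n))
    refine le_trans ?_ h1
    have h2 : 0 < θ 1 := hpos 1 (by omega)
    have : (0:ℝ) < (Δ : ℝ) - 1 - (0:ℕ) := by
      push_cast; have : (3:ℝ) ≤ Δ := by exact_mod_cast hΔ
      linarith
    positivity
  have hkey : D ≤ ψ * P x := by
    rw [hDeq]
    have step1 : ∑ k ∈ Finset.range n, ((Δ : ℝ) - 1 - k) * θ (k + 1) * ((n.choose k : ℝ)) * x ^ k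
        ≤ ∑ k ∈ Finset.range n, ψ * (θ k * ((Δ - 1).choose k : ℝ) * x ^ k) := by
      apply Finset.sum_le_sum
      intro k hk
      have hkn : k < n := Finset.mem_range.mp hk
      have hθk : 0 < θ k := hpos k (by omega)
      have hle : ((Δ : ℝ) - 1 - k) * θ (k + 1) / θ k ≤ ψ :=
        Finset.le_sup' (fun k => ((Δ : ℝ) - 1 - k) * θ (k + 1) / θ k) hk
      have hCx : 0 ≤ ((n.choose k : ℝ)) * x ^ k := by positivity
      have : ((Δ : ℝ) - 1 - k) * θ (k + 1) ≤ ψ * θ k := by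
        rw [div_le_iff₀ hθk] at hle
        linarith
      have hcast : ((Δ - 1 : ℕ).choose k : ℝ) = (n.choose k : ℝ) := by rw [hn]
      rw [hcast]
      nlinarith
    refine le_trans step1 ?_
    rw [← Finset.mul_sum]
    apply mul_le_mul_of_nonneg_left _ hψ0
    rw [hPdef]
    apply Finset.sum_le_sum_of_subset_of_nonneg
    · apply Finset.range_subset_range.mpr; omega
    · intro k hk _; exact hterm k hk
  rw [hderiv, abs_div, abs_neg, abs_of_nonneg hDnonneg, abs_of_nonneg (by positivity : (0:ℝ) ≤ (P x)^2)]
  calc D / (P x) ^ 2 ≤ (ψ * P x) / (P x) ^ 2 := by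
        apply div_le_div_of_nonneg_right hkey -- wrong name maybe
        positivity
    _ = ψ / P x := by field_simp
    _ ≤ ψ / θ 0 := div_le_div_of_nonneg_left hψ0 hθ0 hP0
    _ = (θ 0)⁻¹ * ψ := by rw [div_eq_mul_inv, mul_comm]
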